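/- Let r ≥ 2 and let k_1, …, k_r be variables. Then the sum over all unordered increasing trees T on the label set {1,…,r} of wt(T) equals the sum, over all set partitions {X_1, …, X_j} of {2,…,r} into j ≥ 1 nonempty blocks, of k_1^j · ∏_{i=1}^{j} (K_{X_i} − |X_i| + 1) · (Σ_{T_i} wt(T_i)), where K_{X_i} = Σ_{u ∈ X_i} k_u and the inner sum Σ_{T_i} runs over all unordered increasing trees with label set X_i. -/

import Mathlib

open scoped Classical

/-- The root label of a tree with label set `V`, namely `min V` (junk value `0` if `V = ∅`). -/
def rootOf (V : Finset ℕ) : ℕ := V.min.untopD 0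

/-- An unordered increasing tree with label set `V`, encoded by a (total) parent function
`f : ℕ → ℕ`: every non-root vertex `v ∈ V` has a father `f v ∈ V` with `f v < v`;
as a normalization, `f` is the identity on the root and outside `V`. -/
def IsIncTree (V : Finset ℕ) (f : ℕ → ℕ) : Prop :=
  (∀ v ∈ V, if v = rootOf V then f v = v else f v ∈ V ∧ f v < v) ∧ ∀ v, v ∉ V → f v = v

/-- The hook of a vertex `v` in the tree with label set `V` and parent function `f`:
the set of `u ∈ V` consisting of `v` and its descendants (`u` is a descendant of `v` if
iterating `f` starting from `u` reaches `v`). -/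
noncomputable def hookN (V : Finset ℕ) (f : ℕ → ℕ) (v : ℕ) : Finset ℕ :=
  V.filter fun u => ∃ n, f^[n] u = v

/-- The weight of an unordered increasing tree with label set `V` and parent function `f`:
`wt(T) = ∏_{v ∈ V, v ≠ min V} k_{f(v)} · ((Σ_{u ∈ 𝔥_T(v)} k_u) − h_T(v) + 1)`,
in the polynomial ring `ℚ[(k_v)]` (the variable `v : ℕ` is `k_v`). -/
noncomputable def wtN (V : Finset ℕ) (f : ℕ → ℕ) : MvPolynomial ℕ ℚ :=
  ∏ v ∈ V.erase (rootOf V),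
    MvPolynomial.X (f v) *
      ((∑ u ∈ hookN V f v, MvPolynomial.X u) - ((hookN V f v).card : MvPolynomial ℕ ℚ) + 1)

section Basic

variable {V : Finset ℕ} {f : ℕ → ℕ} {u v c : ℕ}

lemma rootOf_spec (h : V.Nonempty) : rootOf V ∈ V ∧ ∀ v ∈ V, rootOf V ≤ v := by
  rcases Finset.min_of_nonempty h with ⟨a, ha⟩
  have hra : rootOf V = a := by rw [rootOf, ha]; rfl
  refine ⟨hra ▸ Finset.mem_of_min ha, fun v hv => ?_⟩
  have := Finset.min_le hv
  rw [ha] at this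
  exact_mod_cast hra ▸ this

lemma rootOf_mem (h : V.Nonempty) : rootOf V ∈ V := (rootOf_spec h).1

lemma rootOf_le (hv : v ∈ V) : rootOf V ≤ v := (rootOf_spec ⟨v, hv⟩).2 v hv

lemma rootOf_eq (hv : v ∈ V) (hle : ∀ u ∈ V, v ≤ u) : rootOf V = v :=
  le_antisymm (rootOf_le hv) (hle _ (rootOf_mem ⟨v, hv⟩))

lemma rootOf_Icc {r : ℕ} (hr : 1 ≤ r) : rootOf (Finset.Icc 1 r) = 1 :=
  rootOf_eq (Finset.mem_Icc.2 ⟨le_rfl, hr⟩) (fun u hu => (Finset.mem_Icc.1 hu).1)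

namespace IsIncTree

lemma apply_le (h : IsIncTree V f) (v : ℕ) : f v ≤ v := by
  by_cases hv : v ∈ V
  · have := h.1 v hv
    split_ifs at this with hroot
    · exact this.le
    · exact this.2.le
  · exact (h.2 v hv).le

lemma apply_root (h : IsIncTree V f) (hv : rootOf V ∈ V) : f (rootOf V) = rootOf V := by
  have := h.1 _ hv; simpa using this

lemma apply_mem (h : IsIncTree V f) (hv : v ∈ V) : f v ∈ V := by
  have := h.1 v hv
  split_ifs at this with hroot
  · rw [this, hroot]; rwa [hroot] at hv
  · exact this.1

lemma apply_lt (h : IsIncTree V f) (hv : v ∈ V) (hvr : v ≠ rootOf V) : f v < v := by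
  have := h.1 v hv; rw [if_neg hvr] at this; exact this.2

lemma iterate_le (h : IsIncTree V f) (n v : ℕ) : f^[n] v ≤ v := by
  induction n with
  | zero => simp
  | succ n ih => rw [Function.iterate_succ_apply']; exact (h.apply_le _).trans ih

lemma iterate_mem (h : IsIncTree V f) (hv : v ∈ V) (n : ℕ) : f^[n] v ∈ V := by
  induction n with
  | zero => simpa
  | succ n ih => rw [Function.iterate_succ_apply']; exact h.apply_mem ih

lemma reaches_root (h : IsIncTree V f) (hv : v ∈ V) : ∃ n, f^[n] v = rootOf V := by
  induction v using Nat.strong_induction_on with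
  | _ v ih =>
    by_cases hvr : v = rootOf V
    · exact ⟨0, hvr⟩
    · obtain ⟨n, hn⟩ := ih (f v) (h.apply_lt hv hvr) (h.apply_mem hv)
      exact ⟨n + 1, by rwa [Function.iterate_succ_apply]⟩

lemma mem_hook_self (hv : v ∈ V) : v ∈ hookN V f v :=
  Finset.mem_filter.2 ⟨hv, 0, rfl⟩

lemma hook_subset : hookN V f v ⊆ V := Finset.filter_subset _ _

lemma le_of_mem_hook (h : IsIncTree V f) (hu : u ∈ hookN V f v) : v ≤ u := by
  obtain ⟨-, n, hn⟩ := Finset.mem_filter.1 hu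
  exact hn ▸ h.iterate_le n u

lemma rootOf_hook (h : IsIncTree V f) (hv : v ∈ V) : rootOf (hookN V f v) = v :=
  rootOf_eq (mem_hook_self hv) (fun u hu => h.le_of_mem_hook hu)

lemma hook_subset_hook (h : IsIncTree V f) (hu : u ∈ hookN V f v) :
    hookN V f u ⊆ hookN V f v := by
  obtain ⟨-, n, hn⟩ := Finset.mem_filter.1 hu
  intro w hw
  obtain ⟨hwV, m, hm⟩ := Finset.mem_filter.1 hw
  exact Finset.mem_filter.2 ⟨hwV, n + m, by rw [Function.iterate_add_apply, hm, hn]⟩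

lemma apply_mem_hook (h : IsIncTree V f) (hv : v ∈ hookN V f c) (hvc : v ≠ c) :
    f v ∈ hookN V f c := by
  obtain ⟨hvV, n, hn⟩ := Finset.mem_filter.1 hv
  cases n with
  | zero => exact absurd hn hvc
  | succ n => exact Finset.mem_filter.2 ⟨h.apply_mem hvV, n, by
      rwa [Function.iterate_succ_apply] at hn⟩

end IsIncTree

lemma treeSet_finite (V : Finset ℕ) : {f : ℕ → ℕ | IsIncTree V f}.Finite := by
  have hfin : ({g : ↥V → ℕ | ∀ x, g x ∈ V}).Finite := by
    have : {g : ↥V → ℕ | ∀ x, g x ∈ V} ⊆ Set.pi Set.univ (fun _ : ↥V => (V : Set ℕ)) := by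
      intro g hg x _; exact hg x
    exact (Set.Finite.pi (fun _ => V.finite_toSet)).subset this
  apply Set.Finite.of_finite_image (f := fun f (x : ↥V) => f x)
  · exact hfin.subset (by rintro _ ⟨f, hf, rfl⟩; exact fun x => hf.apply_mem x.2)
  · intro f hf g hg hfg
    funext x
    by_cases hx : x ∈ V
    · exact congrFun hfg ⟨x, hx⟩
    · rw [hf.2 x hx, hg.2 x hx]

end Basic

section Decomp

open Finset MvPolynomial

variable {r : ℕ} {f : ℕ → ℕ} {c v u w : ℕ} {B : Finset ℕ}

noncomputable def childrenF (r : ℕ) (f : ℕ → ℕ) : Finset ℕ :=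
  (Finset.Icc 1 r).filter fun v => v ≠ 1 ∧ f v = 1

noncomputable def partF (r : ℕ) (f : ℕ → ℕ) : Finset (Finset ℕ) :=
  (childrenF r f).image (hookN (Finset.Icc 1 r) f)

noncomputable def restF (f : ℕ → ℕ) (B : Finset ℕ) : ℕ → ℕ :=
  fun v => if v ∈ B.erase (rootOf B) then f v else v

lemma one_mem_Icc (hr : 2 ≤ r) : (1 : ℕ) ∈ Finset.Icc 1 r :=
  Finset.mem_Icc.2 ⟨le_rfl, le_trans one_le_two hr⟩

lemma rootOf_Icc' (hr : 2 ≤ r) : rootOf (Finset.Icc 1 r) = 1 :=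
  rootOf_Icc (le_trans one_le_two hr)

lemma f_one (hr : 2 ≤ r) (h : IsIncTree (Finset.Icc 1 r) f) : f 1 = 1 := by
  have h1 := rootOf_Icc' hr
  have := h.apply_root (by rw [h1]; exact one_mem_Icc hr)
  rwa [h1] at this

lemma iterate_one (hr : 2 ≤ r) (h : IsIncTree (Finset.Icc 1 r) f) (k : ℕ) : f^[k] 1 = 1 :=
  Function.iterate_fixed (f_one hr h) k

lemma mem_childrenF : c ∈ childrenF r f ↔ c ∈ Finset.Icc 1 r ∧ c ≠ 1 ∧ f c = 1 := by
  simp [childrenF]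

lemma two_le_of_child (hc : c ∈ childrenF r f) : 2 ≤ c := by
  have := (Finset.mem_Icc.1 (mem_childrenF.1 hc).1).1
  have := (mem_childrenF.1 hc).2.1
  omega

lemma hook_child_subset (h : IsIncTree (Finset.Icc 1 r) f) (hc : c ∈ childrenF r f) :
    hookN (Finset.Icc 1 r) f c ⊆ Finset.Icc 2 r := by
  intro u hu
  have h1 : u ∈ Finset.Icc 1 r := IsIncTree.hook_subset hu
  have h2 : c ≤ u := h.le_of_mem_hook hu
  have := two_le_of_child hc
  rw [Finset.mem_Icc] at h1 ⊢
  omega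

lemma mem_hook_child (hr : 2 ≤ r) (h : IsIncTree (Finset.Icc 1 r) f) (hu : u ∈ Finset.Icc 2 r) :
    ∃ c ∈ childrenF r f, u ∈ hookN (Finset.Icc 1 r) f c := by
  have huV : u ∈ Finset.Icc 1 r := by
    rw [Finset.mem_Icc] at hu ⊢; omega
  have hex : ∃ n, f^[n] u = 1 := by
    obtain ⟨n, hn⟩ := h.reaches_root huV
    exact ⟨n, by rwa [rootOf_Icc' hr] at hn⟩
  classical
  set n := Nat.find hex with hn
  have hfn : f^[n] u = 1 := Nat.find_spec hex
  have hn0 : n ≠ 0 := by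
    intro h0
    rw [h0] at hfn
    simp at hfn
    rw [Finset.mem_Icc] at hu; omega
  set c := f^[n - 1] u with hcdef
  have hfc : f c = 1 := by
    have h2 : n - 1 + 1 = n := by omega
    have h3 : f (f^[n-1] u) = f^[n-1+1] u := (Function.iterate_succ_apply' f (n-1) u).symm
    rw [hcdef, h3, h2]
    exact hfn
  have hc1 : c ≠ 1 := fun hc1 => Nat.find_min hex (by omega) hc1
  have hcV : c ∈ Finset.Icc 1 r := h.iterate_mem huV _
  exact ⟨c, mem_childrenF.2 ⟨hcV, hc1, hfc⟩,
    Finset.mem_filter.2 ⟨huV, n - 1, rfl⟩⟩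

lemma child_eq_of_iterate (hr : 2 ≤ r) (h : IsIncTree (Finset.Icc 1 r) f)
    (hc : c ∈ childrenF r f) (hc' : c' ∈ childrenF r f) {k : ℕ} (hk : f^[k] c = c') :
    c = c' := by
  cases k with
  | zero => exact hk
  | succ k =>
    exfalso
    rw [Function.iterate_succ_apply, (mem_childrenF.1 hc).2.2, iterate_one hr h] at hk
    exact (mem_childrenF.1 hc').2.1 hk.symm

lemma hook_child_disjoint (hr : 2 ≤ r) (h : IsIncTree (Finset.Icc 1 r) f)
    (hc : c ∈ childrenF r f) (hc' : c' ∈ childrenF r f) (hne : c ≠ c') :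
    Disjoint (hookN (Finset.Icc 1 r) f c) (hookN (Finset.Icc 1 r) f c') := by
  rw [Finset.disjoint_left]
  intro u hu hu'
  obtain ⟨-, n, hn⟩ := Finset.mem_filter.1 hu
  obtain ⟨-, m, hm⟩ := Finset.mem_filter.1 hu'
  rcases le_total n m with hle | hle
  · refine hne (child_eq_of_iterate hr h hc hc' (k := m - n) ?_)
    rw [← hn, ← Function.iterate_add_apply, Nat.sub_add_cancel hle, hm]
  · refine hne (child_eq_of_iterate hr h hc' hc (k := n - m) ?_).symm
    rw [← hm, ← Function.iterate_add_apply, Nat.sub_add_cancel hle, hn]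

lemma rootOf_hook_child (h : IsIncTree (Finset.Icc 1 r) f) (hc : c ∈ childrenF r f) :
    rootOf (hookN (Finset.Icc 1 r) f c) = c :=
  h.rootOf_hook (mem_childrenF.1 hc).1

lemma partF_nonempty (h : IsIncTree (Finset.Icc 1 r) f) (hB : B ∈ partF r f) : B.Nonempty := by
  rw [partF] at hB
  obtain ⟨c, hc, rfl⟩ := Finset.mem_image.1 hB
  exact ⟨c, IsIncTree.mem_hook_self (mem_childrenF.1 hc).1⟩

lemma partF_disjoint (hr : 2 ≤ r) (h : IsIncTree (Finset.Icc 1 r) f) :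
    ((partF r f : Set (Finset ℕ))).PairwiseDisjoint id := by
  intro B hB B' hB' hne
  simp only [partF, Finset.coe_image, Set.mem_image, Finset.mem_coe] at hB hB'
  obtain ⟨c, hc, rfl⟩ := hB
  obtain ⟨c', hc', rfl⟩ := hB'
  have hcc' : c ≠ c' := fun hcc => hne (by rw [hcc])
  exact hook_child_disjoint hr h hc hc' hcc'

lemma partF_biUnion (hr : 2 ≤ r) (h : IsIncTree (Finset.Icc 1 r) f) :
    (partF r f).biUnion id = Finset.Icc 2 r := by
  ext u
  simp only [Finset.mem_biUnion, id, partF, Finset.mem_image]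
  constructor
  · rintro ⟨B, ⟨c, hc, rfl⟩, hu⟩
    exact hook_child_subset h hc hu
  · intro hu
    obtain ⟨c, hc, hmem⟩ := mem_hook_child hr h hu
    exact ⟨_, ⟨c, hc, rfl⟩, hmem⟩

lemma exists_child_of_mem_partF (hB : B ∈ partF r f) :
    ∃ c ∈ childrenF r f, B = hookN (Finset.Icc 1 r) f c := by
  rw [partF] at hB
  obtain ⟨c, hc, rfl⟩ := Finset.mem_image.1 hB
  exact ⟨c, hc, rfl⟩

end Decomp

section Rest

open Finset

variable {r : ℕ} {f : ℕ → ℕ} {c v u w : ℕ} {B : Finset ℕ}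

lemma restF_isTree (hr : 2 ≤ r) (h : IsIncTree (Finset.Icc 1 r) f) (hB : B ∈ partF r f) :
    IsIncTree B (restF f B) := by
  obtain ⟨c, hc, rfl⟩ := exists_child_of_mem_partF hB
  set B := hookN (Finset.Icc 1 r) f c with hBdef
  have hroot : rootOf B = c := rootOf_hook_child h hc
  constructor
  · intro v hv
    split_ifs with hvr
    · rw [restF, if_neg (fun hh => (Finset.mem_erase.1 hh).1 hvr)]
    · have hv' : v ∈ B.erase (rootOf B) := Finset.mem_erase.2 ⟨hroot ▸ hvr, hv⟩
      rw [restF, if_pos hv']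
      have hfv : f v ∈ B := h.apply_mem_hook hv (hroot ▸ hvr)
      refine ⟨hfv, h.apply_lt (IsIncTree.hook_subset hv) ?_⟩
      rw [rootOf_Icc' hr]
      have := h.le_of_mem_hook hv
      have := two_le_of_child hc
      omega
  · intro v hv
    rw [restF, if_neg (fun hh => hv (Finset.mem_erase.1 hh).2)]

lemma restF_apply (hroot : rootOf B = c) (hv : v ∈ B) (hvc : v ≠ c) : restF f B v = f v := by
  rw [restF, if_pos (Finset.mem_erase.2 ⟨hroot ▸ hvc, hv⟩)]

/-- Key: hooks of non-root vertices of a block agree in the big tree and in the block tree. -/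
lemma hook_eq (hr : 2 ≤ r) (h : IsIncTree (Finset.Icc 1 r) f) (hB : B ∈ partF r f)
    (hv : v ∈ B) (hvr : v ≠ rootOf B) :
    hookN (Finset.Icc 1 r) f v = hookN B (restF f B) v := by
  obtain ⟨c, hc, rfl⟩ := exists_child_of_mem_partF hB
  set V := Finset.Icc 1 r
  set B := hookN V f c with hBdef
  have hroot : rootOf B = c := rootOf_hook_child h hc
  rw [hroot] at hvr
  set g := restF f B with hgdef
  have hgc : g c = c := by
    rw [hgdef, restF, if_neg (by rw [hroot]; exact fun hh => (Finset.mem_erase.1 hh).1 rfl)]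
  have hv2 : 2 ≤ v := le_trans (two_le_of_child hc) (h.le_of_mem_hook hv)
  -- hook of v in big tree is inside B.erase c
  have hsub : hookN V f v ⊆ B.erase c := by
    intro w hw
    refine Finset.mem_erase.2 ⟨?_, IsIncTree.hook_subset_hook h hv hw⟩
    rintro rfl
    obtain ⟨-, m, hm⟩ := Finset.mem_filter.1 hw
    cases m with
    | zero => exact hvr hm.symm
    | succ m =>
      rw [Function.iterate_succ_apply, (mem_childrenF.1 hc).2.2, iterate_one hr h] at hm
      omega
  ext u
  simp only [hookN, Finset.mem_filter]
  constructor
  · rintro ⟨huV, n, hn⟩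
    have hstep : ∀ k, k ≤ n → f^[k] u ∈ hookN V f v := by
      intro k hk
      refine Finset.mem_filter.2 ⟨h.iterate_mem huV _, n - k, ?_⟩
      rw [← Function.iterate_add_apply, Nat.sub_add_cancel hk, hn]
    have hiter : ∀ k, k ≤ n → g^[k] u = f^[k] u := by
      intro k hk
      induction k with
      | zero => rfl
      | succ k ih =>
        rw [Function.iterate_succ_apply', Function.iterate_succ_apply',
          ih (by omega)]
        have hk' : f^[k] u ∈ B.erase c := hsub (hstep k (by omega))
        rw [hgdef, restF, if_pos (hroot ▸ hk')]
    have huB : u ∈ B := (Finset.mem_erase.1 (hsub (hstep 0 (by omega)))).2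
    exact ⟨huB, n, by rw [hiter n le_rfl]; exact hn⟩
  · rintro ⟨huB, n, hn⟩
    have hmaps : ∀ w, w ∈ B → g w ∈ B := by
      intro w hw
      by_cases hwc : w = c
      · rw [hwc, hgc]; exact IsIncTree.mem_hook_self (mem_childrenF.1 hc).1
      · rw [hgdef, restF_apply hroot hw hwc]
        exact h.apply_mem_hook hw hwc
    have hiterB : ∀ k, g^[k] u ∈ B := by
      intro k
      induction k with
      | zero => simpa
      | succ k ih => rw [Function.iterate_succ_apply']; exact hmaps _ ih
    have hne : ∀ k, k ≤ n → g^[k] u ≠ c := by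
      intro k hk hkc
      have : g^[n] u = c := by
        have : g^[n - k + k] u = c := by
          rw [Function.iterate_add_apply, hkc, Function.iterate_fixed hgc]
        rwa [Nat.sub_add_cancel hk] at this
      rw [hn] at this
      exact hvr this
    have hiter : ∀ k, k ≤ n → g^[k] u = f^[k] u := by
      intro k hk
      induction k with
      | zero => rfl
      | succ k ih =>
        rw [Function.iterate_succ_apply', Function.iterate_succ_apply', ← ih (by omega)]
        have hmem : g^[k] u ∈ B.erase c :=
          Finset.mem_erase.2 ⟨hne k (by omega), hiterB k⟩
        rw [hgdef, restF_apply hroot (hiterB k) (hne k (by omega))]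
    exact ⟨IsIncTree.hook_subset huB, n, by rw [← hiter n le_rfl]; exact hn⟩

end Rest

section Wt

open Finset MvPolynomial

variable {r : ℕ} {f : ℕ → ℕ} {B : Finset ℕ}

lemma Icc_erase_one (r : ℕ) : (Finset.Icc 1 r).erase 1 = Finset.Icc 2 r := by
  rw [Finset.Icc_erase_left]
  ext x
  simp [Finset.mem_Ioc, Finset.mem_Icc]
  omega

lemma wt_block (hr : 2 ≤ r) (h : IsIncTree (Finset.Icc 1 r) f) (hB : B ∈ partF r f) :
    ∏ v ∈ B, (MvPolynomial.X (f v) *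
        ((∑ u ∈ hookN (Finset.Icc 1 r) f v, MvPolynomial.X u)
          - ((hookN (Finset.Icc 1 r) f v).card : MvPolynomial ℕ ℚ) + 1))
      = MvPolynomial.X 1 *
        (((∑ u ∈ B, MvPolynomial.X u) - (B.card : MvPolynomial ℕ ℚ) + 1) *
          wtN B (restF f B)) := by
  obtain ⟨c, hc, hBc⟩ := exists_child_of_mem_partF hB
  have hroot : rootOf B = c := hBc ▸ rootOf_hook_child h hc
  have hcB : c ∈ B := hBc ▸ IsIncTree.mem_hook_self (mem_childrenF.1 hc).1
  rw [← Finset.mul_prod_erase B _ hcB]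
  have hhookc : hookN (Finset.Icc 1 r) f c = B := hBc.symm
  have hterm : MvPolynomial.X (f c) *
      ((∑ u ∈ hookN (Finset.Icc 1 r) f c, MvPolynomial.X u)
        - ((hookN (Finset.Icc 1 r) f c).card : MvPolynomial ℕ ℚ) + 1)
      = MvPolynomial.X 1 *
        ((∑ u ∈ B, MvPolynomial.X u) - (B.card : MvPolynomial ℕ ℚ) + 1) := by
    rw [hhookc, (mem_childrenF.1 hc).2.2]
  rw [hterm]
  have hwt : ∏ v ∈ B.erase c, (MvPolynomial.X (f v) *
      ((∑ u ∈ hookN (Finset.Icc 1 r) f v, MvPolynomial.X u)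
        - ((hookN (Finset.Icc 1 r) f v).card : MvPolynomial ℕ ℚ) + 1))
      = wtN B (restF f B) := by
    rw [wtN, hroot]
    refine Finset.prod_congr rfl fun v hv => ?_
    obtain ⟨hvc, hvB⟩ := Finset.mem_erase.1 hv
    have h1 : restF f B v = f v := restF_apply hroot hvB hvc
    have h2 : hookN (Finset.Icc 1 r) f v = hookN B (restF f B) v :=
      hook_eq hr h hB hvB (hroot ▸ hvc)
    rw [h1, h2]
  rw [hwt, mul_assoc]

lemma wt_decomp (hr : 2 ≤ r) (h : IsIncTree (Finset.Icc 1 r) f) :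
    wtN (Finset.Icc 1 r) f
      = MvPolynomial.X 1 ^ (partF r f).card *
        ∏ B ∈ partF r f,
          ((∑ u ∈ B, MvPolynomial.X u) - (B.card : MvPolynomial ℕ ℚ) + 1) *
            wtN B (restF f B) := by
  rw [wtN, rootOf_Icc' hr, Icc_erase_one, ← partF_biUnion hr h,
    Finset.prod_biUnion (partF_disjoint hr h)]
  simp only [id]
  rw [Finset.prod_congr rfl (fun B hB => wt_block hr h hB), Finset.prod_mul_distrib,
    Finset.prod_const]

end Wt

section Glue

open Finset

noncomputable def blockOf (P : Finset (Finset ℕ)) (v : ℕ) : Finset ℕ :=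
  if h : ∃ B ∈ P, v ∈ B then h.choose else ∅

noncomputable def glueF (P : Finset (Finset ℕ)) (γ : ∀ B ∈ P, ℕ → ℕ) (v : ℕ) : ℕ :=
  if h : blockOf P v ∈ P ∧ v ∈ blockOf P v then
    (if v = rootOf (blockOf P v) then 1 else γ (blockOf P v) h.1 v) else v

variable {r : ℕ} {P : Finset (Finset ℕ)} {γ : ∀ B ∈ P, ℕ → ℕ} {B : Finset ℕ} {v u : ℕ}

def ValidP (r : ℕ) (P : Finset (Finset ℕ)) : Prop :=
  (∀ B ∈ P, B.Nonempty) ∧ ((P : Set (Finset ℕ))).PairwiseDisjoint id ∧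
    P.biUnion id = Finset.Icc 2 r

lemma blockOf_spec (h : ∃ B ∈ P, v ∈ B) : blockOf P v ∈ P ∧ v ∈ blockOf P v := by
  rw [blockOf, dif_pos h]
  exact ⟨h.choose_spec.1, h.choose_spec.2⟩

lemma blockOf_eq (hdisj : ((P : Set (Finset ℕ))).PairwiseDisjoint id)
    (hB : B ∈ P) (hv : v ∈ B) : blockOf P v = B := by
  have hspec := blockOf_spec ⟨B, hB, hv⟩
  by_contra hne
  have := hdisj hspec.1 hB hne
  exact (Finset.disjoint_left.1 this) hspec.2 hv

lemma block_subset (hP : ValidP r P) (hB : B ∈ P) : B ⊆ Finset.Icc 2 r := by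
  rw [← hP.2.2]
  exact Finset.subset_biUnion_of_mem id hB

lemma glueF_of_mem (hP : ValidP r P) (hB : B ∈ P) (hv : v ∈ B) :
    glueF P γ v = if v = rootOf B then 1 else γ B hB v := by
  have hb : blockOf P v = B := blockOf_eq hP.2.1 hB hv
  rw [glueF]
  rw [dif_pos (by rw [hb]; exact ⟨hB, hv⟩)]
  simp only [hb]

lemma glueF_of_not_mem (hP : ValidP r P) (hv : v ∉ Finset.Icc 2 r) :
    glueF P γ v = v := by
  rw [glueF, dif_neg]
  rintro ⟨h1, h2⟩
  exact hv (by rw [← hP.2.2]; exact Finset.mem_biUnion.2 ⟨_, h1, h2⟩)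

end Glue

section Glue2

open Finset

variable {r : ℕ} {P : Finset (Finset ℕ)} {γ : ∀ B ∈ P, ℕ → ℕ} {B : Finset ℕ} {v u : ℕ}

lemma Icc_two_subset (r : ℕ) : Finset.Icc 2 r ⊆ Finset.Icc 1 r := by
  intro x hx; rw [Finset.mem_Icc] at *; omega

lemma glue_isTree (hr : 2 ≤ r) (hP : ValidP r P)
    (hγ : ∀ B (hB : B ∈ P), IsIncTree B (γ B hB)) :
    IsIncTree (Finset.Icc 1 r) (glueF P γ) := by
  constructor
  · intro v hv
    rw [rootOf_Icc' hr]
    split_ifs with hv1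
    · subst hv1
      exact glueF_of_not_mem hP (by simp)
    · have hv2 : v ∈ Finset.Icc 2 r := by rw [Finset.mem_Icc] at *; omega
      obtain ⟨B, hB, hvB⟩ := Finset.mem_biUnion.1 (hP.2.2 ▸ hv2)
      rw [glueF_of_mem hP hB hvB]
      have hv2le : 2 ≤ v := (Finset.mem_Icc.1 hv2).1
      split_ifs with hroot
      · exact ⟨one_mem_Icc hr, by omega⟩
      · have h1 : γ B hB v ∈ B := (hγ B hB).apply_mem hvB
        have h2 : γ B hB v < v := (hγ B hB).apply_lt hvB hroot
        exact ⟨Icc_two_subset r (block_subset hP hB h1), h2⟩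
  · intro v hv
    exact glueF_of_not_mem hP (fun hh => hv (Icc_two_subset r hh))

lemma glue_one (hP : ValidP r P) (k : ℕ) : (glueF P γ)^[k] 1 = 1 :=
  Function.iterate_fixed (glueF_of_not_mem hP (by simp)) k

lemma rootOf_mem_of (hP : ValidP r P) (hB : B ∈ P) : rootOf B ∈ B := rootOf_mem (hP.1 B hB)

lemma rootOf_two_le (hP : ValidP r P) (hB : B ∈ P) : 2 ≤ rootOf B :=
  (Finset.mem_Icc.1 (block_subset hP hB (rootOf_mem_of hP hB))).1

lemma hook_glue (hr : 2 ≤ r) (hP : ValidP r P)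
    (hγ : ∀ B (hB : B ∈ P), IsIncTree B (γ B hB)) (hB : B ∈ P) :
    hookN (Finset.Icc 1 r) (glueF P γ) (rootOf B) = B := by
  set c := rootOf B with hc
  have hcB : c ∈ B := rootOf_mem_of hP hB
  have hc1 : c ≠ 1 := by have := rootOf_two_le hP hB; omega
  ext u
  simp only [hookN, Finset.mem_filter]
  constructor
  · rintro ⟨huV, n, hn⟩
    -- trace path: stays in its own block until it hits 1
    by_cases hu2 : u ∈ Finset.Icc 2 r
    · obtain ⟨B', hB', huB'⟩ := Finset.mem_biUnion.1 (hP.2.2 ▸ hu2)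
      have hpath : ∀ k, (glueF P γ)^[k] u ∈ B' ∨ (glueF P γ)^[k] u = 1 := by
        intro k
        induction k with
        | zero => exact Or.inl huB'
        | succ k ih =>
          rw [Function.iterate_succ_apply']
          rcases ih with hmem | hone
          · rw [glueF_of_mem hP hB' hmem]
            split_ifs with hroot
            · exact Or.inr rfl
            · exact Or.inl ((hγ B' hB').apply_mem hmem)
          · rw [hone]; exact Or.inr (glueF_of_not_mem hP (by simp))
      rcases hpath n with hmem | hone
      · rw [hn] at hmem
        have : B' = B := by
          by_contra hne
          exact (Finset.disjoint_left.1 (hP.2.1 hB' hB hne)) hmem hcB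
        exact this ▸ huB'
      · rw [hn] at hone; exact absurd hone hc1
    · have hu1 : u = 1 := by
        rw [Finset.mem_Icc] at huV hu2; omega
      rw [hu1, glue_one hP] at hn
      exact absurd hn.symm hc1
  · intro huB
    -- u reaches c under the block tree, and G agrees along the way
    have hex : ∃ n, (γ B hB)^[n] u = c := (hγ B hB).reaches_root huB
    classical
    set n := Nat.find hex with hndef
    have hfn : (γ B hB)^[n] u = c := Nat.find_spec hex
    have hmin : ∀ k, k < n → (γ B hB)^[k] u ≠ c := fun k hk => Nat.find_min hex hk
    have hiterB : ∀ k, (γ B hB)^[k] u ∈ B := (hγ B hB).iterate_mem huB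
    have hiter : ∀ k, k ≤ n → (glueF P γ)^[k] u = (γ B hB)^[k] u := by
      intro k hk
      induction k with
      | zero => rfl
      | succ k ih =>
        rw [Function.iterate_succ_apply', Function.iterate_succ_apply', ih (by omega)]
        rw [glueF_of_mem hP hB (hiterB k), if_neg (hmin k (by omega))]
    refine ⟨Icc_two_subset r (block_subset hP hB huB), n, ?_⟩
    rw [hiter n le_rfl, hfn]

end Glue2

section Glue3

open Finset

variable {r : ℕ} {P : Finset (Finset ℕ)} {γ : ∀ B ∈ P, ℕ → ℕ} {B : Finset ℕ} {v u : ℕ}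
variable {f : ℕ → ℕ}

lemma children_glue (hr : 2 ≤ r) (hP : ValidP r P)
    (hγ : ∀ B (hB : B ∈ P), IsIncTree B (γ B hB)) :
    childrenF r (glueF P γ) = P.image rootOf := by
  ext v
  rw [mem_childrenF, Finset.mem_image]
  constructor
  · rintro ⟨hvV, hv1, hv⟩
    have hv2 : v ∈ Finset.Icc 2 r := by rw [Finset.mem_Icc] at *; omega
    obtain ⟨B, hB, hvB⟩ := Finset.mem_biUnion.1 (hP.2.2 ▸ hv2)
    simp only [id_eq] at hvB
    rw [glueF_of_mem hP hB hvB] at hv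
    split_ifs at hv with hroot
    · exact ⟨B, hB, hroot.symm⟩
    · have : γ B hB v ∈ B := (hγ B hB).apply_mem hvB
      have h2 := (Finset.mem_Icc.1 (block_subset hP hB this)).1
      omega
  · rintro ⟨B, hB, rfl⟩
    have h2 := rootOf_two_le hP hB
    have hmem := rootOf_mem_of hP hB
    refine ⟨Icc_two_subset r (block_subset hP hB hmem), by omega, ?_⟩
    rw [glueF_of_mem hP hB hmem, if_pos rfl]

lemma part_glue (hr : 2 ≤ r) (hP : ValidP r P)
    (hγ : ∀ B (hB : B ∈ P), IsIncTree B (γ B hB)) :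
    partF r (glueF P γ) = P := by
  rw [partF, children_glue hr hP hγ, Finset.image_image]
  have : ∀ B ∈ P, (hookN (Finset.Icc 1 r) (glueF P γ) ∘ rootOf) B = id B := by
    intro B hB
    exact hook_glue hr hP hγ hB
  rw [Finset.image_congr (fun B hB => this B hB), Finset.image_id]

lemma rest_glue (hP : ValidP r P)
    (hγ : ∀ B (hB : B ∈ P), IsIncTree B (γ B hB)) (hB : B ∈ P) :
    restF (glueF P γ) B = γ B hB := by
  funext v
  by_cases hv : v ∈ B.erase (rootOf B)
  · obtain ⟨hvne, hvB⟩ := Finset.mem_erase.1 hv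
    rw [restF, if_pos hv, glueF_of_mem hP hB hvB, if_neg hvne]
  · rw [restF, if_neg hv]
    by_cases hvB : v ∈ B
    · have : v = rootOf B := by
        by_contra hne
        exact hv (Finset.mem_erase.2 ⟨hne, hvB⟩)
      rw [this]
      exact ((hγ B hB).apply_root (rootOf_mem_of hP hB)).symm
    · exact ((hγ B hB).2 v hvB).symm

lemma glue_rest (hr : 2 ≤ r) (h : IsIncTree (Finset.Icc 1 r) f) :
    glueF (partF r f) (fun B _ => restF f B) = f := by
  have hP : ValidP r (partF r f) :=
    ⟨fun B hB => partF_nonempty h hB, partF_disjoint hr h, partF_biUnion hr h⟩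
  funext v
  by_cases hv2 : v ∈ Finset.Icc 2 r
  · obtain ⟨B, hB, hvB⟩ := Finset.mem_biUnion.1 (hP.2.2 ▸ hv2)
    simp only [id_eq] at hvB
    rw [glueF_of_mem hP hB hvB]
    obtain ⟨c, hc, rfl⟩ := exists_child_of_mem_partF hB
    have hroot : rootOf (hookN (Finset.Icc 1 r) f c) = c := rootOf_hook_child h hc
    split_ifs with hr'
    · rw [hr', hroot] at *
      exact ((mem_childrenF.1 hc).2.2).symm
    · exact restF_apply hroot hvB (fun hvc => hr' (hvc.trans hroot.symm))
  · rw [glueF_of_not_mem hP hv2]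
    by_cases hvV : v ∈ Finset.Icc 1 r
    · have hv1 : v = 1 := by rw [Finset.mem_Icc] at *; omega
      rw [hv1, f_one hr h]
    · exact (h.2 v hvV).symm

end Glue3

section Main

open Finset MvPolynomial

lemma validSet_finite (r : ℕ) : {P : Finset (Finset ℕ) | ValidP r P}.Finite := by
  apply Set.Finite.subset (Finset.finite_toSet ((Finset.Icc 2 r).powerset.powerset))
  intro P hP
  rw [Finset.mem_coe, Finset.mem_powerset]
  intro B hB
  rw [Finset.mem_powerset, ← hP.2.2]
  exact Finset.subset_biUnion_of_mem id hB

lemma finsum_trees (V : Finset ℕ) :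
    (∑ᶠ (f : ℕ → ℕ) (_ : IsIncTree V f), wtN V f)
      = ∑ f ∈ (treeSet_finite V).toFinset, wtN V f :=
  finsum_mem_eq_finite_toFinset_sum (fun f => wtN V f) (treeSet_finite V)

lemma perP (r : ℕ) (hr : 2 ≤ r) {P : Finset (Finset ℕ)} (hPv : ValidP r P) :
    ∑ f ∈ ((treeSet_finite (Finset.Icc 1 r)).toFinset.filter (fun f => partF r f = P)),
        wtN (Finset.Icc 1 r) f
      = (MvPolynomial.X 1 : MvPolynomial ℕ ℚ) ^ P.card *
          ∏ B ∈ P,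
            ((∑ u ∈ B, MvPolynomial.X u) - (B.card : MvPolynomial ℕ ℚ) + 1) *
              ∑ g ∈ (treeSet_finite B).toFinset, wtN B g := by
  have hstep : ∀ B ∈ P,
      ((∑ u ∈ B, MvPolynomial.X u) - (B.card : MvPolynomial ℕ ℚ) + 1) *
          ∑ g ∈ (treeSet_finite B).toFinset, wtN B g
        = ∑ g ∈ (treeSet_finite B).toFinset,
            ((∑ u ∈ B, MvPolynomial.X u) - (B.card : MvPolynomial ℕ ℚ) + 1) * wtN B g :=
    fun B _ => Finset.mul_sum _ _ _
  rw [Finset.prod_congr rfl hstep, Finset.prod_sum, Finset.mul_sum]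
  refine Finset.sum_nbij' (i := fun f => fun B (_ : B ∈ P) => restF f B)
    (j := fun γ => glueF P γ) ?_ ?_ ?_ ?_ ?_
  · intro f hf
    obtain ⟨hfT, hfP⟩ := Finset.mem_filter.1 hf
    rw [Set.Finite.mem_toFinset] at hfT
    refine Finset.mem_pi.2 fun B hB => ?_
    rw [Set.Finite.mem_toFinset]
    exact restF_isTree hr hfT (hfP ▸ hB)
  · intro γ hγ
    have hγ' : ∀ B (hB : B ∈ P), IsIncTree B (γ B hB) := by
      intro B hB
      have := Finset.mem_pi.1 hγ B hB
      rwa [Set.Finite.mem_toFinset] at this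
    refine Finset.mem_filter.2 ⟨?_, part_glue hr hPv hγ'⟩
    rw [Set.Finite.mem_toFinset]
    exact glue_isTree hr hPv hγ'
  · intro f hf
    obtain ⟨hfT, hfP⟩ := Finset.mem_filter.1 hf
    rw [Set.Finite.mem_toFinset] at hfT
    subst hfP
    exact glue_rest hr hfT
  · intro γ hγ
    have hγ' : ∀ B (hB : B ∈ P), IsIncTree B (γ B hB) := by
      intro B hB
      have := Finset.mem_pi.1 hγ B hB
      rwa [Set.Finite.mem_toFinset] at this
    funext B hB
    exact rest_glue hPv hγ' hB
  · intro f hf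
    obtain ⟨hfT, hfP⟩ := Finset.mem_filter.1 hf
    rw [Set.Finite.mem_toFinset] at hfT
    subst hfP
    rw [wt_decomp hr hfT]
    congr 1
    rw [← Finset.prod_attach (partF r f)
      (fun B => ((∑ u ∈ B, MvPolynomial.X u) - (B.card : MvPolynomial ℕ ℚ) + 1)
        * wtN B (restF f B))]


/-- The recursion obtained by removing the root: for `r ≥ 2`, the sum of `wt(T)` over all
unordered increasing trees on `{1, …, r}` equals the sum, over all set partitions
`{X_1, …, X_j}` of `{2, …, r}` into nonempty blocks, of
`k_1^j · ∏_{i=1}^{j} (K_{X_i} − |X_i| + 1) · (Σ_{T_i} wt(T_i))`, where the inner sum runs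
over all unordered increasing trees with label set `X_i`. -/
theorem stmt11 (r : ℕ) (hr : 2 ≤ r) :
    ∑ᶠ (f : ℕ → ℕ) (_ : IsIncTree (Finset.Icc 1 r) f), wtN (Finset.Icc 1 r) f
      = ∑ᶠ (P : Finset (Finset ℕ))
          (_ : (∀ B ∈ P, B.Nonempty) ∧ (P : Set (Finset ℕ)).PairwiseDisjoint id ∧
                P.biUnion id = Finset.Icc 2 r),
          (MvPolynomial.X 1 : MvPolynomial ℕ ℚ) ^ P.card *
            ∏ B ∈ P,
              ((∑ u ∈ B, MvPolynomial.X u) - (B.card : MvPolynomial ℕ ℚ) + 1) *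
                ∑ᶠ (g : ℕ → ℕ) (_ : IsIncTree B g), wtN B g := by
  classical
  have hconvR : (∑ᶠ (P : Finset (Finset ℕ)) (_ : ValidP r P),
      (MvPolynomial.X 1 : MvPolynomial ℕ ℚ) ^ P.card *
        ∏ B ∈ P,
          ((∑ u ∈ B, MvPolynomial.X u) - (B.card : MvPolynomial ℕ ℚ) + 1) *
            ∑ᶠ (g : ℕ → ℕ) (_ : IsIncTree B g), wtN B g)
      = ∑ P ∈ (validSet_finite r).toFinset,
          (MvPolynomial.X 1 : MvPolynomial ℕ ℚ) ^ P.card *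
            ∏ B ∈ P,
              ((∑ u ∈ B, MvPolynomial.X u) - (B.card : MvPolynomial ℕ ℚ) + 1) *
                ∑ᶠ (g : ℕ → ℕ) (_ : IsIncTree B g), wtN B g :=
    finsum_mem_eq_finite_toFinset_sum _ (validSet_finite r)
  calc ∑ᶠ (f : ℕ → ℕ) (_ : IsIncTree (Finset.Icc 1 r) f), wtN (Finset.Icc 1 r) f
      = ∑ f ∈ (treeSet_finite (Finset.Icc 1 r)).toFinset, wtN (Finset.Icc 1 r) f :=
        finsum_trees _
    _ = ∑ P ∈ (validSet_finite r).toFinset,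
          ∑ f ∈ ((treeSet_finite (Finset.Icc 1 r)).toFinset.filter (fun f => partF r f = P)),
            wtN (Finset.Icc 1 r) f := by
        refine (Finset.sum_fiberwise_of_maps_to ?_ _).symm
        intro f hf
        rw [Set.Finite.mem_toFinset] at hf ⊢
        exact ⟨fun B hB => partF_nonempty hf hB, partF_disjoint hr hf, partF_biUnion hr hf⟩
    _ = ∑ P ∈ (validSet_finite r).toFinset,
          (MvPolynomial.X 1 : MvPolynomial ℕ ℚ) ^ P.card *
            ∏ B ∈ P,
              ((∑ u ∈ B, MvPolynomial.X u) - (B.card : MvPolynomial ℕ ℚ) + 1) *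
                ∑ᶠ (g : ℕ → ℕ) (_ : IsIncTree B g), wtN B g := by
        refine Finset.sum_congr rfl fun P hP => ?_
        rw [Set.Finite.mem_toFinset] at hP
        rw [perP r hr hP]
        refine congrArg _ (Finset.prod_congr rfl fun B _ => ?_)
        rw [finsum_trees B]
    _ = _ := hconvR.symm

end Main
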